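/- When a node N of CP contains a potential cyclic deadlock, any solution satisfying the relaxed sufficient condition that is consistent with N's constraints remains consistent with the constraints of at least one of N's children; i.e., the branching on a detected potential cyclic deadlock is exhaustive. -/

import Mathlib

open scoped Classical

/-- An OTIMAPP path set: `n` agents, agent `i` follows the path
`loc i 0, loc i 1, ..., loc i (L i)`; `loc i 0` is its start and `loc i (L i)` its goal. -/
structure OTI (V : Type) (n : ℕ) where
  L : Fin n → ℕ
  loc : Fin n → ℕ → V

namespace OTI

variable {V : Type} {n : ℕ}

/-- Activation of agent `i` in configuration `c` (clocks): the agent advances iff it is not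
at the end of its path and its next vertex is unoccupied. -/
noncomputable def step (P : OTI V n) (c : Fin n → ℕ) (i : Fin n) : Fin n → ℕ :=
  if c i < P.L i ∧ ∀ j, j ≠ i → P.loc j (c j) ≠ P.loc i (c i + 1)
  then Function.update c i (c i + 1) else c

/-- Configuration after the first `k` activations of execution `e`. -/
noncomputable def run (P : OTI V n) (e : ℕ → Fin n) : ℕ → Fin n → ℕ
  | 0 => fun _ => 0
  | k + 1 => P.step (P.run e k) (e k)

/-- An execution is fair when every agent is activated infinitely often. -/
def Fair (e : ℕ → Fin n) : Prop := ∀ (i : Fin n) (k : ℕ), ∃ m, k ≤ m ∧ e m = i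

/-- All agents reach their goals after finitely many activations. -/
def Terminates (P : OTI V n) (e : ℕ → Fin n) : Prop :=
  ∃ k, ∀ i, P.run e k i = P.L i

/-- A feasible OTIMAPP solution: every fair execution terminates. -/
def Feasible (P : OTI V n) : Prop := ∀ e, Fair e → P.Terminates e

/-- A configuration (assignment of clocks) is reachable by some execution. -/
def Reachable (P : OTI V n) (c : Fin n → ℕ) : Prop := ∃ e k, P.run e k = c

/-- A potential cyclic deadlock: distinct agents `σ 0, …, σ k` with clock values `t`
such that each agent's next vertex is the next agent's current vertex, cyclically. -/
def PotentialCyclic (P : OTI V n) {k : ℕ} (σ : Fin (k + 1) → Fin n)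
    (t : Fin (k + 1) → ℕ) : Prop :=
  Function.Injective σ ∧ (∀ m, t m < P.L (σ m)) ∧
    ∀ m, P.loc (σ m) (t m + 1) = P.loc (σ (m + 1)) (t (m + 1))

/-- A reachable cyclic deadlock: a potential cyclic deadlock whose clock values are realized
by some reachable configuration. -/
def ReachableCyclic (P : OTI V n) {k : ℕ} (σ : Fin (k + 1) → Fin n)
    (t : Fin (k + 1) → ℕ) : Prop :=
  P.PotentialCyclic σ t ∧ ∃ c, P.Reachable c ∧ ∀ m, c (σ m) = t m

/-- A potential terminal deadlock `(i, j, tj)`: agent `i`'s goal lies on `j`'s path. -/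
def PotentialTerminal (P : OTI V n) (i j : Fin n) (tj : ℕ) : Prop :=
  i ≠ j ∧ tj ≤ P.L j ∧ P.loc i (P.L i) = P.loc j tj

/-- A reachable terminal deadlock: some execution puts `i` at its goal and `j` at clock `tj - 1`. -/
def ReachableTerminal (P : OTI V n) (i j : Fin n) (tj : ℕ) : Prop :=
  P.PotentialTerminal i j tj ∧ ∃ c, P.Reachable c ∧ c i = P.L i ∧ c j + 1 = tj

/-- The path set is a set of paths on graph `G` with starts `s` and goals `g`. -/
def OnGraph (P : OTI V n) (G : SimpleGraph V) (s g : Fin n → V) : Prop :=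
  (∀ i, P.loc i 0 = s i) ∧ (∀ i, P.loc i (P.L i) = g i) ∧
    ∀ i t, t < P.L i → G.Adj (P.loc i t) (P.loc i (t + 1))

/-- A fragment: a nonempty chain of (agent, clock) pairs with distinct agents, where each
agent's next vertex equals the next agent's current vertex. -/
def IsFragment (P : OTI V n) (l : List (Fin n × ℕ)) : Prop :=
  l ≠ [] ∧ (l.map Prod.fst).Nodup ∧ (∀ p ∈ l, p.2 < P.L p.1) ∧
    l.Chain' fun p q => P.loc p.1 (p.2 + 1) = P.loc q.1 q.2

/-- The vertex a fragment starts from. -/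
def fragStart (P : OTI V n) (l : List (Fin n × ℕ)) : Option V :=
  l.head?.map fun p => P.loc p.1 p.2

/-- The vertex a fragment ends at. -/
def fragEnd (P : OTI V n) (l : List (Fin n × ℕ)) : Option V :=
  l.getLast?.map fun p => P.loc p.1 (p.2 + 1)

end OTI

/-- A path set respects a constraint set: no agent `c.1` traverses the forbidden directed
edge `(c.2.1, c.2.2)`. -/
def RespectsC {V : Type} {n : ℕ} (P : OTI V n) (C : Finset (Fin n × V × V)) : Prop :=
  ∀ c ∈ C, ∀ t, t < P.L c.1 → ¬(P.loc c.1 t = c.2.1 ∧ P.loc c.1 (t + 1) = c.2.2)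

/-- The relaxed sufficient condition: no use of other agents' goals and no potential
cyclic deadlocks. -/
def Relaxed {V : Type} {n : ℕ} (P : OTI V n) : Prop :=
  (∀ i j : Fin n, i ≠ j → ∀ t, t ≤ P.L i → P.loc i t = P.loc j (P.L j) → t = 0) ∧
  ∀ (k : ℕ) (σ : Fin (k + 1) → Fin n) (t : Fin (k + 1) → ℕ), ¬ P.PotentialCyclic σ t

/-- exhaustive branching of CP: when the path set of a CP node contains a
potential cyclic deadlock, any relaxed-condition solution consistent with the node's
constraints is consistent with the constraints of at least one of its children. -/
theorem cp_branching_exhaustive {V : Type} {n : ℕ} (G : SimpleGraph V) (s g : Fin n → V)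
    (P Pstar : OTI V n) (hP : P.OnGraph G s g) (hPs : Pstar.OnGraph G s g)
    (hrel : Relaxed Pstar) (C : Finset (Fin n × V × V)) (hC : RespectsC Pstar C)
    (l : List (Fin n × ℕ)) (hfrag : P.IsFragment l)
    (hcyc : P.fragStart l = P.fragEnd l) :
    ∃ p ∈ l, RespectsC Pstar
      (insert (p.1, P.loc p.1 p.2, P.loc p.1 (p.2 + 1)) C) := by
  by_contra hcon
  push_neg at hcon
  -- every candidate edge is used by Pstar
  have huse : ∀ p ∈ l, ∃ t, t < Pstar.L p.1 ∧ Pstar.loc p.1 t = P.loc p.1 p.2 ∧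
      Pstar.loc p.1 (t + 1) = P.loc p.1 (p.2 + 1) := by
    intro p hp
    by_contra hne
    push_neg at hne
    apply hcon p hp
    intro c hc t ht
    rcases Finset.mem_insert.mp hc with rfl | hcC
    · intro ⟨h1, h2⟩
      exact hne t ht h1 h2
    · exact hC c hcC t ht
  obtain ⟨hne, hnod, hlt, hch⟩ := hfrag
  obtain ⟨k, hk⟩ : ∃ k, l.length = k + 1 := by
    cases hl : l.length with
    | zero => exact absurd (List.length_eq_zero_iff.mp hl) hne
    | succ k => exact ⟨k, rfl⟩
  set gi : Fin (k + 1) → Fin n × ℕ := fun m => l.get (Fin.cast hk.symm m) with hgi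
  have hgimem : ∀ m, gi m ∈ l := fun m => List.get_mem l ⟨m.val, by omega⟩
  have hspec := fun m => (huse (gi m) (hgimem m)).choose_spec
  set τ : Fin (k + 1) → ℕ := fun m => (huse (gi m) (hgimem m)).choose with hτ
  -- the key: consecutive (cyclically) P-edges chain up
  have hchain : ∀ m : Fin (k + 1),
      P.loc (gi m).1 ((gi m).2 + 1) = P.loc (gi (m + 1)).1 (gi (m + 1)).2 := by
    intro m
    rcases lt_or_eq_of_le (Nat.lt_succ_iff.mp m.isLt) with hm | hm
    · -- non-wrap case
      have hadd : (m + 1 : Fin (k + 1)) = ⟨m.val + 1, by omega⟩ := by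
        rw [Fin.add_def]
        congr 1
        simp [Nat.mod_eq_of_lt (by omega : m.val + 1 < k + 1)]
      have := List.isChain_iff_getElem.mp hch m.val (by omega)
      rw [hadd]
      exact this
    · -- wrap case
      have hm1 : (m + 1 : Fin (k + 1)) = 0 := by
        rw [Fin.add_def]
        simp [hm]
      have hlast : gi m = l.getLast hne := by
        rw [List.getLast_eq_getElem]
        simp [hgi, List.get_eq_getElem, hm, hk]
      have hhead : gi (m + 1) = l.head hne := by
        rw [hm1, List.head_eq_getElem]
        simp [hgi, List.get_eq_getElem]
      have := hcyc
      unfold OTI.fragStart OTI.fragEnd at this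
      rw [List.head?_eq_head hne, List.getLast?_eq_getLast hne] at this
      simp only [Option.map_some] at this
      rw [hlast, hhead]
      exact (Option.some.inj this).symm
  -- build a potential cyclic deadlock for Pstar
  refine absurd ?_ (hrel.2 k (fun m => (gi m).1) τ)
  refine ⟨?_, fun m => (hspec m).1, ?_⟩
  · have hlen : (l.map Prod.fst).length = k + 1 := by simp [hk]
    intro a b hab
    have ha : (l.map Prod.fst).get (Fin.cast hlen.symm a) = (gi a).1 := by
      simp [hgi, List.get_eq_getElem]
    have hb : (l.map Prod.fst).get (Fin.cast hlen.symm b) = (gi b).1 := by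
      simp [hgi, List.get_eq_getElem]
    have := List.nodup_iff_injective_get.mp hnod (show (l.map Prod.fst).get (Fin.cast hlen.symm a) = (l.map Prod.fst).get (Fin.cast hlen.symm b) by rw [ha, hb]; exact hab)
    have hv : (a : ℕ) = b := by simpa using congrArg Fin.val this
    exact Fin.ext hv
  · intro m
    have h1 := (hspec m).2.2
    have h2 := (hspec (m + 1)).2.1
    rw [h1, h2, hchain m]
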